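/- arXiv:1704.04465 — 3 statements merged into one kernel-verified Lean document; each statement's English description precedes it below -/
import Mathlib

section
/- The content placement game is an exact potential game with potential f: for every cache m, every profile B = (b^(m), b^(−m)) of feasible placements and every alternative feasible placement b̃^(m) for cache m, it holds that f^(m)(b̃^(m), b^(−m)) − f^(m)(b^(m), b^(−m)) = f(b̃^(m), b^(−m)) − f(b^(m), b^(−m)). -/
open Finset

/-- `qm p B m j` = Σ_{s ∋ m} p_s Π_{ℓ ∈ s \ {m}} (1 - b^(ℓ)_j). -/
noncomputable def qm {N J : ℕ} (p : Finset (Fin N) → ℝ) (B : Fin N → Fin J → ℝ)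
    (m : Fin N) (j : Fin J) : ℝ :=
  ∑ s ∈ Finset.univ.filter (fun s : Finset (Fin N) => m ∈ s),
    p s * ∏ ℓ ∈ s.erase m, (1 - B ℓ j)

/-- Miss probability f(B) = Σ_j a_j Σ_{s ≠ ∅} p_s Π_{ℓ ∈ s} (1 - b^(ℓ)_j). -/
noncomputable def missProb {N J : ℕ} (a : Fin J → ℝ) (p : Finset (Fin N) → ℝ)
    (B : Fin N → Fin J → ℝ) : ℝ :=
  ∑ j, a j * ∑ s ∈ Finset.univ.filter (fun s : Finset (Fin N) => s.Nonempty),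
    p s * ∏ ℓ ∈ s, (1 - B ℓ j)

/-- Local miss probability f^(m)(B) = Σ_j a_j (1 - b^(m)_j) q_m(j). -/
noncomputable def localMiss {N J : ℕ} (a : Fin J → ℝ) (p : Finset (Fin N) → ℝ)
    (B : Fin N → Fin J → ℝ) (m : Fin N) : ℝ :=
  ∑ j, a j * (1 - B m j) * qm p B m j

/-- A feasible placement: a 0/1 vector over the J files with exactly K ones. -/
def IsPlacement {J : ℕ} (K : ℕ) (b : Fin J → ℝ) : Prop :=
  (∀ j, b j = 0 ∨ b j = 1) ∧ ∑ j, b j = (K : ℝ)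

private lemma qm_update {N J : ℕ} (p : Finset (Fin N) → ℝ) (B : Fin N → Fin J → ℝ)
    (m : Fin N) (btilde : Fin J → ℝ) (j : Fin J) :
    qm p (Function.update B m btilde) m j = qm p B m j := by
  unfold qm
  refine Finset.sum_congr rfl fun s hs => ?_
  congr 1
  refine Finset.prod_congr rfl fun ℓ hℓ => ?_
  rw [Function.update_of_ne (Finset.ne_of_mem_erase hℓ)]

private lemma miss_split {N J : ℕ} (a : Fin J → ℝ) (p : Finset (Fin N) → ℝ)
    (B : Fin N → Fin J → ℝ) (m : Fin N) :
    missProb a p B = localMiss a p B m +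
      ∑ j, a j * ∑ s ∈ Finset.univ.filter
        (fun s : Finset (Fin N) => s.Nonempty ∧ m ∉ s),
        p s * ∏ ℓ ∈ s, (1 - B ℓ j) := by
  unfold missProb localMiss qm
  rw [← Finset.sum_add_distrib]
  refine Finset.sum_congr rfl fun j _ => ?_
  rw [mul_assoc, ← mul_add]
  congr 1
  rw [← Finset.sum_filter_add_sum_filter_not
    (Finset.univ.filter (fun s : Finset (Fin N) => s.Nonempty)) (fun s => m ∈ s)]
  congr 1
  · rw [Finset.filter_filter, Finset.mul_sum]
    rw [show (Finset.univ.filter (fun s : Finset (Fin N) => m ∈ s)) =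
        (Finset.univ.filter (fun s : Finset (Fin N) => s.Nonempty ∧ m ∈ s)) from by
      ext s; simp only [Finset.mem_filter, Finset.mem_univ, true_and]
      exact ⟨fun h => ⟨⟨m, h⟩, h⟩, fun h => h.2⟩]
    refine Finset.sum_congr rfl fun s hs => ?_
    simp only [Finset.mem_filter] at hs
    rw [← Finset.mul_prod_erase s _ hs.2.2]
    ring
  · rw [Finset.filter_filter]

/-- the content placement game is an exact potential game with potential
the miss probability `missProb`. -/
theorem content_placement_exact_potential (N J K : ℕ) (hK1 : 1 ≤ K) (hKJ : K ≤ J)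
    (a : Fin J → ℝ) (ha : ∀ j, 0 ≤ a j) (hasum : ∑ j, a j = 1)
    (p : Finset (Fin N) → ℝ) (hp : ∀ s, 0 ≤ p s)
    (hpsum : ∑ s ∈ Finset.univ.filter (fun s : Finset (Fin N) => s.Nonempty), p s = 1)
    (B : Fin N → Fin J → ℝ) (hB : ∀ m, IsPlacement K (B m))
    (m : Fin N) (btilde : Fin J → ℝ) (hbt : IsPlacement K btilde) :
    localMiss a p (Function.update B m btilde) m - localMiss a p B m =
      missProb a p (Function.update B m btilde) - missProb a p B := by
  rw [miss_split a p (Function.update B m btilde) m, miss_split a p B m]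
  have hrest : ∀ j, ∀ s ∈ Finset.univ.filter
      (fun s : Finset (Fin N) => s.Nonempty ∧ m ∉ s),
      p s * ∏ ℓ ∈ s, (1 - Function.update B m btilde ℓ j) =
      p s * ∏ ℓ ∈ s, (1 - B ℓ j) := by
    intro j s hs
    simp only [Finset.mem_filter] at hs
    congr 1
    refine Finset.prod_congr rfl fun ℓ hℓ => ?_
    rw [Function.update_of_ne (fun h => hs.2.2 (by rw [← h]; exact hℓ))]
  have : ∀ j, (∑ s ∈ Finset.univ.filter
      (fun s : Finset (Fin N) => s.Nonempty ∧ m ∉ s),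
      p s * ∏ ℓ ∈ s, (1 - Function.update B m btilde ℓ j)) =
      ∑ s ∈ Finset.univ.filter (fun s : Finset (Fin N) => s.Nonempty ∧ m ∉ s),
      p s * ∏ ℓ ∈ s, (1 - B ℓ j) := fun j => Finset.sum_congr rfl (hrest j)
  simp only [this]
  ring
end

section
/- The content placement game has a pure Nash equilibrium: any profile B* that minimizes the miss probability f over the (finite, nonempty) set of feasible profiles is a Nash equilibrium, i.e., for every cache m and every feasible alternative placement b̃^(m) one has f^(m)(b*^(m), b*^(−m)) ≤ f^(m)(b̃^(m), b*^(−m)). -/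
open Finset

lemma missProb_decomp {N J : ℕ} (a : Fin J → ℝ) (p : Finset (Fin N) → ℝ)
    (B : Fin N → Fin J → ℝ) (m : Fin N) :
    missProb a p B =
      (∑ j, a j * ∑ s ∈ Finset.univ.filter
          (fun s : Finset (Fin N) => s.Nonempty ∧ m ∉ s),
        p s * ∏ ℓ ∈ s, (1 - B ℓ j)) + localMiss a p B m := by
  unfold missProb localMiss qm
  rw [← Finset.sum_add_distrib]
  refine Finset.sum_congr rfl fun j _ => ?_
  have hsplit := Finset.sum_filter_add_sum_filter_not
    (Finset.univ.filter (fun s : Finset (Fin N) => s.Nonempty))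
    (fun s => m ∈ s) (fun s => p s * ∏ ℓ ∈ s, (1 - B ℓ j))
  rw [Finset.filter_filter, Finset.filter_filter] at hsplit
  have h1 : Finset.univ.filter (fun s : Finset (Fin N) => s.Nonempty ∧ m ∈ s)
      = Finset.univ.filter (fun s : Finset (Fin N) => m ∈ s) := by
    apply Finset.filter_congr
    intro s _
    simp only [iff_iff_implies_and_implies]
    exact ⟨fun h => h.2, fun h => ⟨⟨m, h⟩, h⟩⟩
  rw [h1] at hsplit
  have h2 : ∑ s ∈ Finset.univ.filter (fun s : Finset (Fin N) => m ∈ s),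
      p s * ∏ ℓ ∈ s, (1 - B ℓ j)
      = (1 - B m j) * ∑ s ∈ Finset.univ.filter (fun s : Finset (Fin N) => m ∈ s),
        p s * ∏ ℓ ∈ s.erase m, (1 - B ℓ j) := by
    rw [Finset.mul_sum]
    refine Finset.sum_congr rfl fun s hs => ?_
    have hm : m ∈ s := (Finset.mem_filter.mp hs).2
    rw [← Finset.mul_prod_erase s _ hm]
    ring
  rw [h2] at hsplit
  rw [← hsplit]
  ring

/-- any profile minimizing the miss probability over feasible profiles is a
pure Nash equilibrium of the content placement game. -/
theorem global_min_is_nash (N J K : ℕ) (hK1 : 1 ≤ K) (hKJ : K ≤ J)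
    (a : Fin J → ℝ) (ha : ∀ j, 0 ≤ a j) (hasum : ∑ j, a j = 1)
    (p : Finset (Fin N) → ℝ) (hp : ∀ s, 0 ≤ p s)
    (hpsum : ∑ s ∈ Finset.univ.filter (fun s : Finset (Fin N) => s.Nonempty), p s = 1)
    (Bstar : Fin N → Fin J → ℝ) (hfeas : ∀ m, IsPlacement K (Bstar m))
    (hmin : ∀ B : Fin N → Fin J → ℝ, (∀ m, IsPlacement K (B m)) →
      missProb a p Bstar ≤ missProb a p B) :
    ∀ m : Fin N, ∀ btilde : Fin J → ℝ, IsPlacement K btilde →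
      localMiss a p Bstar m ≤ localMiss a p (Function.update Bstar m btilde) m := by
  intro m btilde hb
  set B' := Function.update Bstar m btilde with hB'
  have hfeas' : ∀ ℓ, IsPlacement K (B' ℓ) := by
    intro ℓ
    rcases eq_or_ne ℓ m with rfl | hne
    · simpa [hB'] using hb
    · simpa [hB', Function.update_of_ne hne] using hfeas ℓ
  have h := hmin B' hfeas'
  rw [missProb_decomp a p Bstar m, missProb_decomp a p B' m] at h
  have hg : (∑ j, a j * ∑ s ∈ Finset.univ.filter
          (fun s : Finset (Fin N) => s.Nonempty ∧ m ∉ s),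
        p s * ∏ ℓ ∈ s, (1 - B' ℓ j))
      = ∑ j, a j * ∑ s ∈ Finset.univ.filter
          (fun s : Finset (Fin N) => s.Nonempty ∧ m ∉ s),
        p s * ∏ ℓ ∈ s, (1 - Bstar ℓ j) := by
    refine Finset.sum_congr rfl fun j _ => ?_
    congr 1
    refine Finset.sum_congr rfl fun s hs => ?_
    have hm : m ∉ s := (Finset.mem_filter.mp hs).2.2
    congr 1
    refine Finset.prod_congr rfl fun ℓ hℓ => ?_
    have : ℓ ≠ m := fun hc => hm (hc ▸ hℓ)
    rw [hB', Function.update_of_ne this]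
  rw [hg] at h
  linarith
end

section
/- Structure of the deterministic simulated annealing optimum: fix a cache m, placements b^(ℓ) ∈ {0,1}^J of the other caches, and τ ∈ (0, 1/2). Let π be a permutation of {1,…,J} with a_{π(1)} q_m(π(1)) ≥ … ≥ a_{π(J)} q_m(π(J)). Suppose L ∈ {0, 1, …, J−1} is such that δ := K − (1−τ)·L − τ·(J − L − 1) satisfies τ ≤ δ ≤ 1−τ. Define b̄ ∈ [τ, 1−τ]^J by b̄_{π(i)} = 1−τ for i ≤ L, b̄_{π(L+1)} = δ, and b̄_{π(i)} = τ for i > L+1. Then Σ_{j=1}^J b̄_j = K and b̄ minimizes f^(m)(·, b^(−m)) over the set {b ∈ [τ, 1−τ]^J : Σ_{j=1}^J b_j = K}. -/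
open Finset

/-- structure of the deterministic simulated annealing optimum: the
(1−τ, …, 1−τ, δ, τ, …, τ) placement along the ordering by a_j q_m(j) sums to K and minimizes
the local miss probability over {b ∈ [τ, 1−τ]^J : Σ_j b_j = K}. -/
theorem dsa_threshold_structure (N J K : ℕ) (hK1 : 1 ≤ K) (hKJ : K ≤ J) (m : Fin N)
    (a : Fin J → ℝ) (ha : ∀ j, 0 ≤ a j) (hasum : ∑ j, a j = 1)
    (p : Finset (Fin N) → ℝ) (hp : ∀ s, 0 ≤ p s)
    (hpsum : ∑ s ∈ Finset.univ.filter (fun s : Finset (Fin N) => s.Nonempty), p s = 1)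
    (B : Fin N → Fin J → ℝ)
    (hB : ∀ ℓ, ℓ ≠ m → ∀ j, B ℓ j = 0 ∨ B ℓ j = 1)
    (τ : ℝ) (hτ : τ ∈ Set.Ioo (0 : ℝ) (1 / 2))
    (π : Equiv.Perm (Fin J))
    (hπ : ∀ i i' : Fin J, i ≤ i' →
      a (π i') * qm p B m (π i') ≤ a (π i) * qm p B m (π i))
    (L : ℕ) (hL : L < J)
    (δ : ℝ) (hδ : δ = (K : ℝ) - (1 - τ) * L - τ * ((J : ℝ) - L - 1))
    (hδlo : τ ≤ δ) (hδhi : δ ≤ 1 - τ)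
    (bbar : Fin J → ℝ)
    (hbbar : ∀ j : Fin J, bbar j =
      if ((π.symm j : ℕ)) < L then 1 - τ
      else if ((π.symm j : ℕ)) = L then δ
      else τ) :
    (∑ j, bbar j = (K : ℝ)) ∧
    ∀ b : Fin J → ℝ, (∀ j, b j ∈ Set.Icc τ (1 - τ)) → ∑ j, b j = (K : ℝ) →
      localMiss a p (Function.update B m bbar) m ≤
        localMiss a p (Function.update B m b) m := by
  have hτ0 : (0:ℝ) < τ := hτ.1
  -- sum of bbar
  have hsum_bbar : ∑ j, bbar j = (K : ℝ) := by
    have h1 : ∑ j, bbar j = ∑ i : Fin J, bbar (π i) :=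
      (Equiv.sum_comp π fun j => bbar j).symm
    have h2 : ∀ i : Fin J, bbar (π i) =
        (if (i : ℕ) < L then 1 - τ else if (i : ℕ) = L then δ else τ) := by
      intro i
      rw [hbbar, Equiv.symm_apply_apply]
    rw [h1, Finset.sum_congr rfl (fun i _ => h2 i),
      Fin.sum_univ_eq_sum_range (fun k => if k < L then 1 - τ else if k = L then δ else τ)]
    have hsplit : Finset.range J = Finset.range (L+1) ∪ Finset.Ico (L+1) J := by
      ext k
      simp only [Finset.mem_union, Finset.mem_range, Finset.mem_Ico]
      omega
    have hdisj : Disjoint (Finset.range (L+1)) (Finset.Ico (L+1) J) := by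
      rw [Finset.disjoint_left]
      intro x hx hx'
      rw [Finset.mem_range] at hx
      rw [Finset.mem_Ico] at hx'
      omega
    rw [hsplit, Finset.sum_union hdisj, Finset.sum_range_succ]
    have hA : ∑ k ∈ Finset.range L,
        (if k < L then 1 - τ else if k = L then δ else τ) = (1 - τ) * L := by
      have h : ∀ k ∈ Finset.range L,
          (if k < L then 1 - τ else if k = L then δ else τ) = (1 - τ) :=
        fun k hk => if_pos (Finset.mem_range.mp hk)
      rw [Finset.sum_congr rfl h, Finset.sum_const, Finset.card_range,
        nsmul_eq_mul, mul_comm]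
    have hB' : (if L < L then 1 - τ else if L = L then δ else τ) = δ := by simp
    have hC : ∑ k ∈ Finset.Ico (L+1) J,
        (if k < L then 1 - τ else if k = L then δ else τ) = τ * ((J:ℝ) - L - 1) := by
      have h : ∀ k ∈ Finset.Ico (L+1) J,
          (if k < L then 1 - τ else if k = L then δ else τ) = τ := by
        intro k hk
        have hk' := (Finset.mem_Ico.mp hk).1
        rw [if_neg (by omega), if_neg (by omega)]
      rw [Finset.sum_congr rfl h, Finset.sum_const, Nat.card_Ico,
        nsmul_eq_mul, mul_comm]
      congr 1
      push_cast [Nat.cast_sub (by omega : L + 1 ≤ J)]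
      ring
    rw [hA, hB', hC, hδ]; ring
  refine ⟨hsum_bbar, ?_⟩
  intro b hb hbsum
  -- qm is unchanged under update at m
  have hqm : ∀ (v : Fin J → ℝ) (j : Fin J),
      qm p (Function.update B m v) m j = qm p B m j := by
    intro v j
    unfold qm
    refine Finset.sum_congr rfl (fun s _ => ?_)
    congr 1
    refine Finset.prod_congr rfl (fun ℓ hℓ => ?_)
    rw [Function.update_of_ne (Finset.ne_of_mem_erase hℓ)]
  have hlm : ∀ (v : Fin J → ℝ),
      localMiss a p (Function.update B m v) m =
        ∑ j, a j * qm p B m j * (1 - v j) := by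
    intro v
    unfold localMiss
    refine Finset.sum_congr rfl (fun j _ => ?_)
    rw [hqm, Function.update_self]; ring
  rw [hlm, hlm]
  set c : Fin J → ℝ := fun j => a j * qm p B m j with hc
  set t : ℝ := c (π ⟨L, hL⟩) with ht
  have key : ∀ j : Fin J, 0 ≤ (c j - t) * (bbar j - b j) := by
    intro j
    have hjb := hb j
    rcases lt_trichotomy ((π.symm j : ℕ)) L with hlt | heq | hgt
    · have hbb : bbar j = 1 - τ := by rw [hbbar]; simp [hlt]
      have hct : t ≤ c j := by
        have := hπ (π.symm j) ⟨L, hL⟩ (by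
          rw [Fin.le_def]; exact le_of_lt hlt)
        simpa [hc, ht] using this
      have : 0 ≤ bbar j - b j := by rw [hbb]; linarith [hjb.2]
      exact mul_nonneg (by linarith) this
    · have : c j = t := by
        rw [ht, hc]
        have : π.symm j = ⟨L, hL⟩ := by
          ext; exact heq
        rw [← this, Equiv.apply_symm_apply]
      rw [this]; ring_nf; simp
    · have hbb : bbar j = τ := by
        rw [hbbar]
        have h1 : ¬ ((π.symm j : ℕ)) < L := by omega
        have h2 : ((π.symm j : ℕ)) ≠ L := by omega
        simp [h1, h2]
      have hct : c j ≤ t := by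
        have := hπ ⟨L, hL⟩ (π.symm j) (by
          rw [Fin.le_def]; exact le_of_lt hgt)
        simpa [hc, ht] using this
      have h3 : bbar j - b j ≤ 0 := by rw [hbb]; linarith [hjb.1]
      nlinarith [mul_nonneg (by linarith : (0:ℝ) ≤ t - c j) (by linarith : (0:ℝ) ≤ b j - bbar j)]
  have hsum : 0 ≤ ∑ j, (c j - t) * (bbar j - b j) :=
    Finset.sum_nonneg (fun j _ => key j)
  have hexp : ∑ j, (c j - t) * (bbar j - b j) =
      (∑ j, c j * bbar j) - (∑ j, c j * b j) - t * ((∑ j, bbar j) - (∑ j, b j)) := by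
    have he : ∀ j : Fin J, (c j - t) * (bbar j - b j) =
        c j * bbar j - c j * b j - (t * bbar j - t * b j) := fun j => by ring
    rw [Finset.sum_congr rfl (fun j _ => he j), Finset.sum_sub_distrib,
      Finset.sum_sub_distrib, Finset.sum_sub_distrib, ← Finset.mul_sum, ← Finset.mul_sum]
    ring
  rw [hsum_bbar, hbsum, sub_self, mul_zero, sub_zero] at hexp
  have hineq : ∑ j, c j * b j ≤ ∑ j, c j * bbar j := by linarith [hexp ▸ hsum]
  calc ∑ j, a j * qm p B m j * (1 - bbar j)
      = (∑ j, c j) - ∑ j, c j * bbar j := by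
        rw [← Finset.sum_sub_distrib]
        exact Finset.sum_congr rfl (fun j _ => by rw [hc]; ring)
    _ ≤ (∑ j, c j) - ∑ j, c j * b j := by linarith
    _ = ∑ j, a j * qm p B m j * (1 - b j) := by
        rw [← Finset.sum_sub_distrib]
        exact Finset.sum_congr rfl (fun j _ => by rw [hc]; ring)
end
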